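/- arXiv:1812.07231 — 2 statements merged into one kernel-verified Lean document; each statement's English description precedes it below -/
import Mathlib

section
/- Let r ≥ 1, let m₁, …, m_r be nonnegative integers, let α > -1, β > 0 and s ∈ ℝ satisfy βα + s > -1. Then the generalized Krein-like functional of Laguerre polynomials satisfies ∫₀^∞ x^{βα+s} e^{-βx} L_{m₁}^{(α)}(x) ⋯ L_{m_r}^{(α)}(x) dx = β^{-βα-s-1} Γ(βα+s+1) C(m₁+α, m₁) ⋯ C(m_r+α, m_r) · F_A^{(r)}(βα+s+1; -m₁, …, -m_r; α+1, …, α+1; 1/β, …, 1/β). -/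
open MeasureTheory Finset Real

/-- Pochhammer symbol `(a)_k = a (a+1) ⋯ (a+k-1)`. -/
noncomputable def poch (a : ℝ) (k : ℕ) : ℝ := ∏ i ∈ Finset.range k, (a + i)

/-- Generalized binomial coefficient `C(a, j) = (a-j+1)_j / j!`. -/
noncomputable def gbinom (a : ℝ) (j : ℕ) : ℝ := poch (a - j + 1) j / (j.factorial : ℝ)

/-- Generalized Laguerre polynomial `L_n^{(α)}`. -/
noncomputable def Lag (α : ℝ) (n : ℕ) (x : ℝ) : ℝ :=
  ∑ i ∈ Finset.range (n + 1),
    ((-1 : ℝ) ^ i / (i.factorial : ℝ)) * gbinom ((n : ℝ) + α) (n - i) * x ^ i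

/-- Physicists' Hermite polynomial `H_n`. -/
noncomputable def Herm (n : ℕ) (x : ℝ) : ℝ :=
  ∑ k ∈ Finset.range (n / 2 + 1),
    ((-1 : ℝ) ^ k * (n.factorial : ℝ) / ((k.factorial : ℝ) * ((n - 2 * k).factorial : ℝ))) *
      (2 * x) ^ (n - 2 * k)

/-- Jacobi polynomial `P_n^{(α,γ)}`. -/
noncomputable def Jac (α γ : ℝ) (n : ℕ) (x : ℝ) : ℝ :=
  ∑ k ∈ Finset.range (n + 1),
    gbinom ((n : ℝ) + α) (n - k) * gbinom ((n : ℝ) + γ) k *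
      ((x - 1) / 2) ^ k * ((x + 1) / 2) ^ (n - k)

/-- Terminating Lauricella function of type A. -/
noncomputable def lauricellaA {r : ℕ} (a : ℝ) (m : Fin r → ℕ) (c x : Fin r → ℝ) : ℝ :=
  ∑ j ∈ Fintype.piFinset (fun i => Finset.range (m i + 1)),
    poch a (∑ i, j i) *
      ∏ i, (poch (-(m i : ℝ)) (j i) / (poch (c i) (j i) * ((j i).factorial : ℝ)) * x i ^ (j i))

/-- Terminating Gauss hypergeometric sum `₂F₁(-k, b; c; x)`. -/
noncomputable def hyp2F1 (k : ℕ) (b c x : ℝ) : ℝ :=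
  ∑ j ∈ Finset.range (k + 1),
    poch (-(k : ℝ)) j * poch b j / (poch c j * (j.factorial : ℝ)) * x ^ j

/-- Terminating hypergeometric sum `₃F₂(-k, b₁, b₂; c₁, c₂; x)`. -/
noncomputable def hyp3F2 (k : ℕ) (b₁ b₂ c₁ c₂ x : ℝ) : ℝ :=
  ∑ j ∈ Finset.range (k + 1),
    poch (-(k : ℝ)) j * poch b₁ j * poch b₂ j /
      (poch c₁ j * poch c₂ j * (j.factorial : ℝ)) * x ^ j

/-- Gauss hypergeometric series `₂F₁(a, b; c; x)` (a terminating series when `a` or `b`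
is a nonpositive integer). -/
noncomputable def hypSum (a b c x : ℝ) : ℝ :=
  ∑' j : ℕ, poch a j * poch b j / (poch c j * (j.factorial : ℝ)) * x ^ j

/-- Terminating Appell function `F₂(a; -m₁, -m₂; c₁, c₂; x₁, x₂)`. -/
noncomputable def appellF2 (a : ℝ) (m₁ m₂ : ℕ) (c₁ c₂ x₁ x₂ : ℝ) : ℝ :=
  ∑ j₁ ∈ Finset.range (m₁ + 1), ∑ j₂ ∈ Finset.range (m₂ + 1),
    poch a (j₁ + j₂) * poch (-(m₁ : ℝ)) j₁ * poch (-(m₂ : ℝ)) j₂ /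
      (poch c₁ j₁ * poch c₂ j₂ * (j₁.factorial : ℝ) * (j₂.factorial : ℝ)) * x₁ ^ j₁ * x₂ ^ j₂

/-- `1/z!` with the convention that it vanishes for negative integers `z`. -/
noncomputable def invFacZ (z : ℤ) : ℝ := if 0 ≤ z then ((z.toNat.factorial : ℕ) : ℝ)⁻¹ else 0

/-- Pochhammer symbol extended to integer index via `(a)_k = Γ(a+k)/Γ(a)` for negative `k`. -/
noncomputable def pochZ (a : ℝ) (k : ℤ) : ℝ :=
  if 0 ≤ k then poch a k.toNat else Real.Gamma (a + (k : ℝ)) / Real.Gamma a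


lemma poch_succ (a : ℝ) (k : ℕ) : poch a (k+1) = poch a k * (a + k) := by
  unfold poch; rw [Finset.prod_range_succ]

lemma poch_add' (a : ℝ) (k l : ℕ) : poch a (k + l) = poch a k * poch (a + k) l := by
  unfold poch
  rw [Finset.prod_range_add]
  congr 1
  refine Finset.prod_congr rfl fun i _ => ?_
  push_cast; ring

lemma poch_pos {a : ℝ} (ha : 0 < a) (k : ℕ) : 0 < poch a k := by
  unfold poch; exact Finset.prod_pos fun i _ => by positivity

lemma Gamma_poch (p : ℝ) (hp : 0 < p) (n : ℕ) :
    Real.Gamma (p + n) = Real.Gamma p * poch p n := by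
  induction n with
  | zero => simp [poch]
  | succ n ih =>
    have h : p + (n:ℝ) ≠ 0 := by positivity
    have h2 : p + ((n+1 : ℕ):ℝ) = (p + n) + 1 := by push_cast; ring
    rw [h2, Real.Gamma_add_one h, ih, poch_succ]; ring

lemma poch_neg_nat (m j : ℕ) (h : j ≤ m) :
    poch (-(m:ℝ)) j * ((m - j).factorial : ℝ) = (-1)^j * (m.factorial : ℝ) := by
  induction j with
  | zero => simp [poch]
  | succ j ih =>
    have hj : j ≤ m := Nat.le_of_succ_le h
    have hjm : (j:ℝ) < m := by exact_mod_cast h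
    have hne : (m:ℝ) - j ≠ 0 := by linarith
    have hfac : ((m - j).factorial : ℝ) = ((m:ℝ) - j) * ((m - (j+1)).factorial : ℝ) := by
      have h3 : m - j = (m - (j+1)) + 1 := by omega
      have h4 : ((m - (j+1) : ℕ) : ℝ) = (m:ℝ) - j - 1 := by
        rw [Nat.cast_sub h]; push_cast; ring
      rw [h3, Nat.factorial_succ, Nat.cast_mul, Nat.cast_add, Nat.cast_one, h4]; ring
    have ihh := ih hj
    rw [hfac] at ihh
    have key : (poch (-(m:ℝ)) (j+1) * ((m - (j+1)).factorial : ℝ)) * ((m:ℝ) - j)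
        = ((-1:ℝ)^(j+1) * (m.factorial : ℝ)) * ((m:ℝ) - j) := by
      rw [poch_succ]
      push_cast at ihh ⊢
      linear_combination (-( (m:ℝ) - j)) * ihh
    exact mul_right_cancel₀ hne key

lemma coeff_key (α : ℝ) (hα : 0 < α + 1) (m j : ℕ) (hj : j ≤ m) :
    (-1:ℝ)^j / (j.factorial : ℝ) * gbinom ((m:ℝ) + α) (m - j) =
    gbinom ((m:ℝ) + α) m * (poch (-(m:ℝ)) j / (poch (α+1) j * (j.factorial : ℝ))) := by
  unfold gbinom
  have hcast : ((m - j : ℕ) : ℝ) = (m:ℝ) - j := Nat.cast_sub hj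
  have h1 : (m:ℝ) + α - ((m-j:ℕ):ℝ) + 1 = (α + 1) + j := by rw [hcast]; ring
  have h2 : (m:ℝ) + α - m + 1 = α + 1 := by ring
  rw [h1, h2]
  have hsplit : poch (α+1) m = poch (α+1) j * poch ((α+1) + j) (m - j) := by
    have h5 := poch_add' (α+1) j (m - j)
    rwa [Nat.add_sub_cancel' hj] at h5
  have hneg := poch_neg_nat m j hj
  have hpj : (0:ℝ) < poch (α+1) j := poch_pos hα j
  have hf1 : ((j.factorial : ℕ):ℝ) ≠ 0 := by exact_mod_cast (Nat.factorial_pos j).ne'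
  have hf2 : (((m-j).factorial : ℕ):ℝ) ≠ 0 := by exact_mod_cast (Nat.factorial_pos (m-j)).ne'
  have hf3 : ((m.factorial : ℕ):ℝ) ≠ 0 := by exact_mod_cast (Nat.factorial_pos m).ne'
  have hN : poch (-(m:ℝ)) j = (-1)^j * (m.factorial : ℝ) / ((m-j).factorial : ℝ) := by
    rw [eq_div_iff hf2]; exact hneg
  rw [hsplit, hN]
  field_simp

lemma integral_term (q b : ℝ) (hq : -1 < q) (hb : 0 < b) :
    ∫ x in Set.Ioi (0:ℝ), x ^ q * Real.exp (-b * x) = (1/b) ^ (q+1) * Real.Gamma (q+1) := by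
  have h := Real.integral_rpow_mul_exp_neg_mul_Ioi (a := q+1) (by linarith) hb
  simpa [add_sub_cancel_right, neg_mul] using h

lemma integrable_term (q b : ℝ) (hq : -1 < q) (hb : 0 < b) :
    MeasureTheory.IntegrableOn (fun x => x ^ q * Real.exp (-b * x)) (Set.Ioi (0:ℝ)) := by
  have h := integrableOn_rpow_mul_exp_neg_mul_rpow hq one_pos hb
  simpa [Real.rpow_one] using h

/-- generalized Krein-like functional of Laguerre polynomials. -/
theorem laguerre_krein_r_functional (r : ℕ) (hr : 1 ≤ r) (m : Fin r → ℕ) (α β s : ℝ)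
    (hα : -1 < α) (hβ : 0 < β) (hs : -1 < β * α + s) :
    ∫ x in Set.Ioi (0 : ℝ), x ^ (β * α + s) * Real.exp (-β * x) * ∏ i, Lag α (m i) x =
      β ^ (-(β * α) - s - 1) * Real.Gamma (β * α + s + 1) *
        (∏ i, gbinom ((m i : ℝ) + α) (m i)) *
        lauricellaA (β * α + s + 1) m (fun _ => α + 1) (fun _ => 1 / β) := by
  have hp : (0:ℝ) < β * α + s + 1 := by linarith
  set J := Fintype.piFinset (fun i => Finset.range (m i + 1)) with hJ
  -- Step 1: rewrite integrand as a finite sum on Ioi 0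
  have h1 : Set.EqOn
      (fun x : ℝ => x ^ (β * α + s) * Real.exp (-β * x) * ∏ i, Lag α (m i) x)
      (fun x : ℝ => ∑ j ∈ J,
        (∏ i, ((-1:ℝ)^(j i) / ((j i).factorial : ℝ) * gbinom ((m i : ℝ) + α) (m i - j i))) *
          (x ^ (β * α + s + (∑ i, j i : ℕ)) * Real.exp (-β * x)))
      (Set.Ioi 0) := by
    intro x hx
    have hx0 : (0:ℝ) < x := hx
    simp only [Lag]
    rw [Finset.prod_univ_sum, Finset.mul_sum]
    refine Finset.sum_congr rfl fun j _ => ?_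
    have hprod : ∏ i, ((-1:ℝ)^(j i) / ((j i).factorial : ℝ) * gbinom ((m i : ℝ) + α) (m i - j i) * x ^ (j i))
        = (∏ i, ((-1:ℝ)^(j i) / ((j i).factorial : ℝ) * gbinom ((m i : ℝ) + α) (m i - j i))) * x ^ (∑ i, j i) := by
      rw [Finset.prod_mul_distrib, Finset.prod_pow_eq_pow_sum]
    rw [hprod]
    have hxp : x ^ (β * α + s + (∑ i, j i : ℕ)) = x ^ (β * α + s) * x ^ (∑ i, j i) := by
      rw [Real.rpow_add hx0, Real.rpow_natCast]
    rw [hxp]; ring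
  rw [setIntegral_congr_fun measurableSet_Ioi h1]
  rw [integral_finset_sum J (fun j _ => by
    exact ((integrable_term (β * α + s + (∑ i, j i : ℕ)) β
      (by have : (0:ℝ) ≤ ((∑ i, j i : ℕ) : ℝ) := Nat.cast_nonneg _; linarith) hβ).const_mul _))]
  simp_rw [MeasureTheory.integral_const_mul]
  rw [show β ^ (-(β * α) - s - 1) * Real.Gamma (β * α + s + 1) *
        (∏ i, gbinom ((m i : ℝ) + α) (m i)) *
        lauricellaA (β * α + s + 1) m (fun _ => α + 1) (fun _ => 1 / β)
      = ∑ j ∈ J, β ^ (-(β * α) - s - 1) * Real.Gamma (β * α + s + 1) *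
        (∏ i, gbinom ((m i : ℝ) + α) (m i)) *
          (poch (β * α + s + 1) (∑ i, j i) *
            ∏ i, (poch (-(m i : ℝ)) (j i) / (poch (α + 1) (j i) * ((j i).factorial : ℝ)) *
              (1/β) ^ (j i)))
      from by rw [lauricellaA, ← Finset.mul_sum]]
  refine Finset.sum_congr rfl fun j hjJ => ?_
  have hjle : ∀ i, j i ≤ m i := by
    intro i
    have := (Fintype.mem_piFinset.mp hjJ) i
    simpa [Nat.lt_succ_iff] using this
  set n := ∑ i, j i with hn
  have hqn : -1 < β * α + s + (n:ℝ) := by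
    have : (0:ℝ) ≤ (n:ℝ) := Nat.cast_nonneg _
    linarith
  rw [integral_term _ _ hqn hβ]
  -- rewrite the Gamma factor
  have hGamma : Real.Gamma (β * α + s + (n:ℝ) + 1)
      = Real.Gamma (β * α + s + 1) * poch (β * α + s + 1) n := by
    rw [show β * α + s + (n:ℝ) + 1 = (β * α + s + 1) + (n:ℝ) from by ring, Gamma_poch _ hp]
  -- rewrite the power factor
  have hpow : ((1:ℝ)/β) ^ (β * α + s + (n:ℝ) + 1)
      = β ^ (-(β * α) - s - 1) * ((1:ℝ)/β) ^ n := by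
    rw [one_div, ← Real.rpow_neg_one β, ← Real.rpow_natCast (β ^ (-1:ℝ)) n,
      ← Real.rpow_mul hβ.le, ← Real.rpow_mul hβ.le, ← Real.rpow_add hβ]
    congr 1
    ring
  -- rewrite the coefficient product
  have hC : (∏ i, ((-1:ℝ)^(j i) / ((j i).factorial : ℝ) * gbinom ((m i : ℝ) + α) (m i - j i)))
      = (∏ i, gbinom ((m i : ℝ) + α) (m i)) *
        ∏ i, (poch (-(m i : ℝ)) (j i) / (poch (α+1) (j i) * ((j i).factorial : ℝ))) := by
    rw [← Finset.prod_mul_distrib]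
    exact Finset.prod_congr rfl fun i _ =>
      coeff_key α (by linarith) (m i) (j i) (hjle i)
  have hsplit2 : (∏ i, (poch (-(m i : ℝ)) (j i) / (poch (α + 1) (j i) * ((j i).factorial : ℝ)) *
        (1/β) ^ (j i)))
      = (∏ i, (poch (-(m i : ℝ)) (j i) / (poch (α+1) (j i) * ((j i).factorial : ℝ)))) *
        ((1:ℝ)/β) ^ n := by
    rw [Finset.prod_mul_distrib, Finset.prod_pow_eq_pow_sum]
  rw [hGamma, hpow, hC, hsplit2]
  ring
end

section
/- Let m, n, s be nonnegative integers with m + n + s even, and let β > 0. Then ∫_{-∞}^{∞} x^{s} e^{-βx²} H_m(x) H_n(x) dx = β^{-1/2} Σ_{j=0}^{⌊(m+s)/2⌋} c_{msj} Σ_{k=0}^{min(m+s−2j, n)} C(m+s−2j, k) C(n, k) · (2^{-2j−k+m+n+s} π k! / Γ((1+2(j+k)−(m+n)−s)/2)) · ((β−1)/β)^{(m+n+s−2(j+k))/2}, where c_{msj} = (2^{m−s} m! s! / (m+s−2j)!) Σ_{k=max(0, m−2j)}^{min(m+s−2j, m)} C(m+s−2j, k) / (2^k (m−k)! (k+j−m)!),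 with the convention that 1/Γ(z) = 0 when z is a nonpositive integer and 1/z! = 0 when z is a negative integer. -/
open MeasureTheory Finset Real

noncomputable def Acoef (n k : ℕ) : ℝ :=
  if 2 * k ≤ n then ((-1 : ℝ) ^ k * (n.factorial : ℝ) / ((k.factorial : ℝ) * ((n - 2 * k).factorial : ℝ))) else 0

lemma Herm_eq_full (n : ℕ) (x : ℝ) :
    Herm n x = ∑ k ∈ Finset.range (n + 1), Acoef n k * (2 * x) ^ (n - 2 * k) := by
  rw [Herm, eq_comm]
  rw [← Finset.sum_subset (Finset.range_subset_range.2 (by omega : n / 2 + 1 ≤ n + 1))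
      (fun k _ hk2 => by
        simp only [mem_range] at hk2
        rw [Acoef, if_neg (by omega), zero_mul])]
  refine Finset.sum_congr rfl fun k hk => ?_
  simp only [mem_range] at hk
  rw [Acoef, if_pos (by omega)]

lemma Herm_zero (x : ℝ) : Herm 0 x = 1 := by simp [Herm]

lemma Herm_one (x : ℝ) : Herm 1 x = 2 * x := by simp [Herm]

lemma Acoef_zero_left (n : ℕ) : Acoef n 0 = 1 := by
  rw [Acoef, if_pos (by omega)]
  simp [Nat.factorial_ne_zero, div_self]

lemma Acoef_rec (n k : ℕ) :
    Acoef (n + 2) (k + 1) = Acoef (n + 1) (k + 1) - 2 * ((n : ℝ) + 1) * Acoef n k := by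
  rcases le_or_gt (2 * (k + 1)) (n + 1) with h1 | h1
  · obtain ⟨r, hr⟩ : ∃ r, n - 2 * k = r + 1 := ⟨n - 2 * k - 1, by omega⟩
    rw [Acoef, if_pos (by omega), Acoef, if_pos h1, Acoef, if_pos (by omega)]
    have e1 : n + 2 - 2 * (k + 1) = r + 1 := by omega
    have e2 : n + 1 - 2 * (k + 1) = r := by omega
    rw [e1, e2, hr]
    have hn : n = 2 * k + r + 1 := by omega
    subst hn
    push_cast [Nat.factorial_succ, pow_succ]
    field_simp
    ring
  · rcases le_or_gt (2 * (k + 1)) (n + 2) with h2 | h2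
    · have hn : n = 2 * k := by omega
      subst hn
      rw [Acoef, if_pos (by omega), Acoef, if_neg (by omega), Acoef, if_pos (by omega)]
      have e1 : 2 * k + 2 - 2 * (k + 1) = 0 := by omega
      have e2 : 2 * k - 2 * k = 0 := by omega
      rw [e1, e2]
      push_cast [Nat.factorial_succ, pow_succ]
      field_simp
      ring
    · rw [Acoef, if_neg (by omega), Acoef, if_neg (by omega), Acoef, if_neg (by omega)]
      ring

lemma Herm_rec (n : ℕ) (x : ℝ) :
    Herm (n + 2) x = 2 * x * Herm (n + 1) x - 2 * ((n : ℝ) + 1) * Herm n x := by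
  rw [Herm_eq_full, Herm_eq_full, Herm_eq_full]
  rw [Finset.mul_sum, Finset.mul_sum]
  have h1 : ∑ k ∈ Finset.range (n + 2), 2 * x * (Acoef (n + 1) k * (2 * x) ^ (n + 1 - 2 * k)) =
      ∑ k ∈ Finset.range (n + 3), Acoef (n + 1) k * (2 * x) ^ (n + 2 - 2 * k) := by
    rw [Finset.sum_range_succ (n := n + 2)]
    rw [Acoef, if_neg (by omega)]
    simp only [zero_mul, add_zero]
    refine Finset.sum_congr rfl fun k hk => ?_
    simp only [mem_range] at hk
    by_cases h : 2 * k ≤ n + 1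
    · have : n + 2 - 2 * k = (n + 1 - 2 * k) + 1 := by omega
      rw [this, pow_succ]
      ring
    · rw [Acoef, if_neg h]
      ring
  have h2 : ∑ k ∈ Finset.range (n + 1), 2 * ((n : ℝ) + 1) * (Acoef n k * (2 * x) ^ (n - 2 * k)) =
      ∑ k ∈ Finset.range (n + 2), 2 * ((n : ℝ) + 1) * (Acoef n k * (2 * x) ^ (n - 2 * k)) := by
    rw [Finset.sum_range_succ (n := n + 1), Acoef, if_neg (by omega)]
    simp
  rw [h1, h2]
  rw [Finset.sum_range_succ' (fun k => Acoef (n + 2) k * (2 * x) ^ (n + 2 - 2 * k)) (n + 2)]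
  rw [Finset.sum_range_succ' (fun k => Acoef (n + 1) k * (2 * x) ^ (n + 2 - 2 * k)) (n + 2)]
  rw [Acoef_zero_left, Acoef_zero_left]
  have key : ∀ k ∈ Finset.range (n + 2),
      Acoef (n + 2) (k + 1) * (2 * x) ^ (n + 2 - 2 * (k + 1)) =
      Acoef (n + 1) (k + 1) * (2 * x) ^ (n + 2 - 2 * (k + 1))
        - 2 * ((n : ℝ) + 1) * (Acoef n k * (2 * x) ^ (n - 2 * k)) := by
    intro k _
    have e : n + 2 - 2 * (k + 1) = n - 2 * k := by omega
    rw [Acoef_rec, e]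
    ring
  rw [Finset.sum_congr rfl key, Finset.sum_sub_distrib]
  ring

lemma two_x_Herm (m : ℕ) (x : ℝ) :
    2 * x * Herm m x = Herm (m + 1) x + 2 * (m : ℝ) * Herm (m - 1) x := by
  cases m with
  | zero => simp [Herm_zero, Herm_one]
  | succ k =>
      have h := Herm_rec k x
      simp only [Nat.succ_sub_one]
      push_cast at h ⊢
      linarith

noncomputable def ccoef (a b k : ℕ) : ℝ :=
  (a.choose k : ℝ) * (b.choose k : ℝ) * (k.factorial : ℝ) * 2 ^ k

lemma ccoef_zero_right (a b : ℕ) : ccoef a b 0 = 1 := by simp [ccoef]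

-- helper: (n+1-k) * C(n+1,k) = (n+1) * C(n,k), unconditionally, in ℝ
lemma hchoose1 (n k : ℕ) :
    (((n + 1 - k : ℕ) : ℝ)) * ((n + 1).choose k : ℝ) = ((n : ℝ) + 1) * (n.choose k : ℝ) := by
  have := Nat.choose_mul_succ_eq n k
  have h2 : ((n.choose k * (n + 1) : ℕ) : ℝ) = (((n + 1).choose k * (n + 1 - k) : ℕ) : ℝ) := by
    exact_mod_cast congrArg (Nat.cast : ℕ → ℝ) this
  push_cast at h2
  linarith

-- helper: (b-k) * C(b,k) = (k+1) * C(b,k+1), unconditionally, in ℝ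
lemma hchoose2 (b k : ℕ) :
    (((b - k : ℕ) : ℝ)) * (b.choose k : ℝ) = ((k : ℝ) + 1) * (b.choose (k + 1) : ℝ) := by
  have := Nat.choose_succ_right_eq b k
  have h2 : ((b.choose (k + 1) * (k + 1) : ℕ) : ℝ) = ((b.choose k * (b - k) : ℕ) : ℝ) := by
    exact_mod_cast congrArg (Nat.cast : ℕ → ℝ) this
  push_cast at h2
  linarith

lemma ccoef_rec (a b k : ℕ) :
    ccoef (a + 2) b (k + 1) =
      ccoef (a + 1) b (k + 1) + 2 * ((a + 1 + b - 2 * k : ℕ) : ℝ) * ccoef (a + 1) b k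
        - 2 * ((a : ℝ) + 1) * ccoef a b k := by
  rcases le_or_gt k b with hkb | hkb
  · rcases le_or_gt k (a + 1) with hka | hka
    · -- generic case
      simp only [ccoef]
      have pascal : ((a + 2).choose (k + 1) : ℝ) = ((a + 1).choose k : ℝ) + ((a + 1).choose (k + 1) : ℝ) := by
        exact_mod_cast congrArg (Nat.cast : ℕ → ℝ) (Nat.choose_succ_succ (a + 1) k)
      have e1 : ((a + 1 + b - 2 * k : ℕ) : ℝ) = ((a + 1 - k : ℕ) : ℝ) + ((b - k : ℕ) : ℝ) := by
        push_cast [Nat.cast_sub (by omega : k ≤ a + 1 + b + k - 2 * k)]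
        have : (a + 1 + b - 2 * k : ℕ) = (a + 1 - k) + (b - k) := by omega
        rw [this]
        push_cast
        ring
      have h1 := hchoose1 a k
      have h2 := hchoose2 b k
      rw [pascal, e1]
      have hfact : ((k + 1).factorial : ℝ) = ((k : ℝ) + 1) * (k.factorial : ℝ) := by
        push_cast [Nat.factorial_succ]; ring
      rw [hfact]
      linear_combination (-2 * (k.factorial : ℝ) * 2 ^ k * (b.choose k : ℝ)) * h1 +
        (-2 * (k.factorial : ℝ) * 2 ^ k * ((a + 1).choose k : ℝ)) * h2
    · -- k > a+1
      have z1 : a.choose k = 0 := Nat.choose_eq_zero_of_lt (by omega)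
      have z2 : (a + 1).choose k = 0 := Nat.choose_eq_zero_of_lt (by omega)
      have z3 : (a + 1).choose (k + 1) = 0 := Nat.choose_eq_zero_of_lt (by omega)
      have z4 : (a + 2).choose (k + 1) = 0 := Nat.choose_eq_zero_of_lt (by omega)
      simp [ccoef, z1, z2, z3, z4]
  · -- k > b
    have z1 : b.choose k = 0 := Nat.choose_eq_zero_of_lt (by omega)
    have z2 : b.choose (k + 1) = 0 := Nat.choose_eq_zero_of_lt (by omega)
    simp [ccoef, z1, z2]

lemma ccoef_top (a b : ℕ) : ccoef a b (b + 1) = 0 := by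
  simp [ccoef, Nat.choose_eq_zero_of_lt (show b < b + 1 by omega)]

theorem Herm_mul (a b : ℕ) (x : ℝ) :
    Herm a x * Herm b x =
      ∑ k ∈ Finset.range (b + 1), ccoef a b k * Herm (a + b - 2 * k) x := by
  induction a using Nat.twoStepInduction with
  | zero =>
      rw [Herm_zero, one_mul, Finset.sum_eq_single_of_mem 0 (by simp)]
      · simp [ccoef_zero_right]
      · intro k _ hk0
        obtain ⟨j, rfl⟩ : ∃ j, k = j + 1 := ⟨k - 1, by omega⟩
        simp [ccoef, Nat.choose_eq_zero_of_lt (show 0 < j + 1 by omega)]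
  | one =>
      rw [Herm_one]
      have h2x := two_x_Herm b x
      cases b with
      | zero => simp [Herm_zero, Herm_one, ccoef_zero_right]
      | succ c =>
          rw [Finset.sum_range_succ' _ (c + 1), Finset.sum_range_succ' _ c]
          have hz : ∀ k, ccoef 1 (c + 1) (k + 1 + 1) = 0 := fun k => by
            simp [ccoef, Nat.choose_eq_zero_of_lt (show 1 < k + 1 + 1 by omega)]
          simp only [hz, zero_mul, Finset.sum_const_zero, zero_add]
          rw [ccoef_zero_right]
          have hc1 : ccoef 1 (c + 1) 1 = 2 * ((c : ℝ) + 1) := by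
            simp [ccoef, Nat.choose_one_right]; ring
          rw [hc1]
          have e0 : 1 + (c + 1) - 2 * 0 = c + 1 + 1 := by omega
          have e1 : 1 + (c + 1) - 2 * 1 = c := by omega
          rw [e0, e1]
          have := two_x_Herm (c + 1) x
          simp only [Nat.add_sub_cancel] at this
          push_cast at this ⊢
          linarith
  | more a iha iha1 =>
      have hrec : Herm (a + 2) x * Herm b x =
          2 * x * (Herm (a + 1) x * Herm b x) - 2 * ((a : ℝ) + 1) * (Herm a x * Herm b x) := by
        rw [Herm_rec]; ring
      have expand : ∀ k ∈ Finset.range (b + 1),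
          2 * x * (ccoef (a + 1) b k * Herm (a + 1 + b - 2 * k) x) =
            ccoef (a + 1) b k * Herm (a + 2 + b - 2 * k) x
              + 2 * ((a + 1 + b - 2 * k : ℕ) : ℝ) * ccoef (a + 1) b k
                  * Herm (a + 2 + b - 2 * (k + 1)) x := by
        intro k hk
        simp only [mem_range] at hk
        rcases le_or_gt k (a + 1) with hka | hka
        · have h2x := two_x_Herm (a + 1 + b - 2 * k) x
          have e1 : a + 1 + b - 2 * k + 1 = a + 2 + b - 2 * k := by omega
          have e2 : a + 1 + b - 2 * k - 1 = a + 2 + b - 2 * (k + 1) := by omega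
          rw [e1, e2] at h2x
          calc 2 * x * (ccoef (a + 1) b k * Herm (a + 1 + b - 2 * k) x)
              = ccoef (a + 1) b k * (2 * x * Herm (a + 1 + b - 2 * k) x) := by ring
            _ = _ := by rw [h2x]; ring
        · have : ccoef (a + 1) b k = 0 := by
            simp [ccoef, Nat.choose_eq_zero_of_lt (show a + 1 < k by omega)]
          rw [this]; ring
      have final : ∀ k ∈ Finset.range (b + 1),
          ccoef (a + 2) b (k + 1) * Herm (a + 2 + b - 2 * (k + 1)) x =
            ccoef (a + 1) b (k + 1) * Herm (a + 2 + b - 2 * (k + 1)) x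
              + 2 * ((a + 1 + b - 2 * k : ℕ) : ℝ) * ccoef (a + 1) b k
                  * Herm (a + 2 + b - 2 * (k + 1)) x
              - 2 * ((a : ℝ) + 1) * (ccoef a b k * Herm (a + b - 2 * k) x) := by
        intro k _
        have eshift : a + b - 2 * k = a + 2 + b - 2 * (k + 1) := by omega
        rw [eshift, ccoef_rec]
        ring
      have e : ∑ k ∈ Finset.range (b + 2), ccoef (a + 2) b k * Herm (a + 2 + b - 2 * k) x
          = ∑ k ∈ Finset.range (b + 1), ccoef (a + 2) b k * Herm (a + 2 + b - 2 * k) x := by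
        rw [Finset.sum_range_succ, ccoef_top, zero_mul, add_zero]
      have e2 : ∑ k ∈ Finset.range (b + 2), ccoef (a + 1) b k * Herm (a + 2 + b - 2 * k) x
          = ∑ k ∈ Finset.range (b + 1), ccoef (a + 1) b k * Herm (a + 2 + b - 2 * k) x := by
        rw [Finset.sum_range_succ, ccoef_top, zero_mul, add_zero]
      have key : ∑ k ∈ Finset.range (b + 1), ccoef (a + 2) b k * Herm (a + 2 + b - 2 * k) x
          = 2 * x * (∑ k ∈ Finset.range (b + 1), ccoef (a + 1) b k * Herm (a + 1 + b - 2 * k) x)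
            - 2 * ((a : ℝ) + 1)
                * (∑ k ∈ Finset.range (b + 1), ccoef a b k * Herm (a + b - 2 * k) x) := by
        calc ∑ k ∈ Finset.range (b + 1), ccoef (a + 2) b k * Herm (a + 2 + b - 2 * k) x
            = ∑ k ∈ Finset.range (b + 2), ccoef (a + 2) b k * Herm (a + 2 + b - 2 * k) x := e.symm
          _ = (∑ k ∈ Finset.range (b + 1), ccoef (a + 2) b (k + 1) * Herm (a + 2 + b - 2 * (k + 1)) x)
                + ccoef (a + 2) b 0 * Herm (a + 2 + b - 2 * 0) x :=
              Finset.sum_range_succ' (fun k => ccoef (a + 2) b k * Herm (a + 2 + b - 2 * k) x) (b + 1)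
          _ = (∑ k ∈ Finset.range (b + 1),
                (ccoef (a + 1) b (k + 1) * Herm (a + 2 + b - 2 * (k + 1)) x
                  + 2 * ((a + 1 + b - 2 * k : ℕ) : ℝ) * ccoef (a + 1) b k
                      * Herm (a + 2 + b - 2 * (k + 1)) x
                  - 2 * ((a : ℝ) + 1) * (ccoef a b k * Herm (a + b - 2 * k) x)))
                + ccoef (a + 2) b 0 * Herm (a + 2 + b - 2 * 0) x := by
              rw [Finset.sum_congr rfl final]
          _ = ((∑ k ∈ Finset.range (b + 1), ccoef (a + 1) b (k + 1) * Herm (a + 2 + b - 2 * (k + 1)) x)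
                + ccoef (a + 1) b 0 * Herm (a + 2 + b - 2 * 0) x)
                + (∑ k ∈ Finset.range (b + 1),
                    2 * ((a + 1 + b - 2 * k : ℕ) : ℝ) * ccoef (a + 1) b k
                      * Herm (a + 2 + b - 2 * (k + 1)) x)
                - ∑ k ∈ Finset.range (b + 1),
                    2 * ((a : ℝ) + 1) * (ccoef a b k * Herm (a + b - 2 * k) x) := by
              rw [Finset.sum_sub_distrib, Finset.sum_add_distrib, ccoef_zero_right, ccoef_zero_right]
              ring
          _ = (∑ k ∈ Finset.range (b + 2), ccoef (a + 1) b k * Herm (a + 2 + b - 2 * k) x)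
                + (∑ k ∈ Finset.range (b + 1),
                    2 * ((a + 1 + b - 2 * k : ℕ) : ℝ) * ccoef (a + 1) b k
                      * Herm (a + 2 + b - 2 * (k + 1)) x)
                - ∑ k ∈ Finset.range (b + 1),
                    2 * ((a : ℝ) + 1) * (ccoef a b k * Herm (a + b - 2 * k) x) := by
              rw [← Finset.sum_range_succ'
                (fun k => ccoef (a + 1) b k * Herm (a + 2 + b - 2 * k) x) (b + 1)]
          _ = (∑ k ∈ Finset.range (b + 1),
                  (ccoef (a + 1) b k * Herm (a + 2 + b - 2 * k) x
                    + 2 * ((a + 1 + b - 2 * k : ℕ) : ℝ) * ccoef (a + 1) b k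
                        * Herm (a + 2 + b - 2 * (k + 1)) x))
                - ∑ k ∈ Finset.range (b + 1),
                    2 * ((a : ℝ) + 1) * (ccoef a b k * Herm (a + b - 2 * k) x) := by
              rw [e2, Finset.sum_add_distrib]
          _ = (∑ k ∈ Finset.range (b + 1),
                  2 * x * (ccoef (a + 1) b k * Herm (a + 1 + b - 2 * k) x))
                - ∑ k ∈ Finset.range (b + 1),
                    2 * ((a : ℝ) + 1) * (ccoef a b k * Herm (a + b - 2 * k) x) := by
              rw [Finset.sum_congr rfl expand]
          _ = _ := by rw [← Finset.mul_sum, ← Finset.mul_sum]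
      rw [hrec, iha, iha1]
      exact key.symm

noncomputable def Ecoef (s i : ℕ) : ℝ :=
  if 2 * i ≤ s then (s.factorial : ℝ) / (2 ^ s * (i.factorial : ℝ) * ((s - 2 * i).factorial : ℝ)) else 0

lemma x_Herm (m : ℕ) (x : ℝ) :
    x * Herm m x = (1 / 2) * Herm (m + 1) x + (m : ℝ) * Herm (m - 1) x := by
  have := two_x_Herm m x
  linarith

lemma Ecoef_rec (s i : ℕ) :
    Ecoef (s + 1) (i + 1) = (1 / 2) * Ecoef s (i + 1) + ((s - 2 * i : ℕ) : ℝ) * Ecoef s i := by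
  rcases le_or_gt (2 * (i + 1)) s with h1 | h1
  · -- generic
    obtain ⟨r, hr⟩ : ∃ r, s = 2 * i + 2 + r := ⟨s - 2 * i - 2, by omega⟩
    subst hr
    rw [Ecoef, if_pos (by omega), Ecoef, if_pos (by omega), Ecoef, if_pos (by omega)]
    have e1 : 2 * i + 2 + r + 1 - 2 * (i + 1) = r + 1 := by omega
    have e2 : 2 * i + 2 + r - 2 * (i + 1) = r := by omega
    have e3 : 2 * i + 2 + r - 2 * i = r + 2 := by omega
    rw [e1, e2, e3]
    push_cast [Nat.factorial_succ, pow_succ]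
    field_simp
    ring
  · rcases le_or_gt (2 * (i + 1)) (s + 1) with h2 | h2
    · -- s = 2i+1
      have hs : s = 2 * i + 1 := by omega
      subst hs
      rw [Ecoef, if_pos (by omega), Ecoef, if_neg (by omega), Ecoef, if_pos (by omega)]
      have e1 : 2 * i + 1 + 1 - 2 * (i + 1) = 0 := by omega
      have e2 : 2 * i + 1 - 2 * i = 1 := by omega
      rw [e1, e2]
      push_cast [Nat.factorial_succ, pow_succ]
      field_simp
      ring
    · rcases le_or_gt (2 * i) s with h3 | h3
      · -- s = 2i
        have hs : s = 2 * i := by omega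
        subst hs
        rw [Ecoef, if_neg (by omega), Ecoef, if_neg (by omega)]
        have e2 : 2 * i - 2 * i = 0 := by omega
        rw [e2]
        push_cast
        ring
      · rw [Ecoef, if_neg (by omega), Ecoef, if_neg (by omega), Ecoef, if_neg (by omega)]
        ring

lemma Ecoef_zero_right (s : ℕ) : Ecoef s 0 = 1 / 2 ^ s := by
  rw [Ecoef, if_pos (by omega)]
  have h : ((s - 2 * 0).factorial : ℝ) = (s.factorial : ℝ) := by norm_num
  rw [h]
  rw [div_eq_div_iff (by positivity) (by positivity)]
  simp [Nat.factorial]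
  ring

lemma Ecoef_big (s i : ℕ) (h : s < 2 * i) : Ecoef s i = 0 := by
  rw [Ecoef, if_neg (by omega)]

theorem xpow_expand (s : ℕ) (x : ℝ) :
    x ^ s = ∑ i ∈ Finset.range (s + 1), Ecoef s i * Herm (s - 2 * i) x := by
  induction s with
  | zero => simp [Herm_zero, Ecoef_zero_right]
  | succ s ih =>
      have step : x ^ (s + 1) = ∑ i ∈ Finset.range (s + 1), Ecoef s i * (x * Herm (s - 2 * i) x) := by
        rw [pow_succ, ih, Finset.sum_mul]
        refine Finset.sum_congr rfl fun i _ => ?_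
        ring
      rw [step]
      have expand : ∀ i ∈ Finset.range (s + 1),
          Ecoef s i * (x * Herm (s - 2 * i) x) =
            (1 / 2) * Ecoef s i * Herm (s + 1 - 2 * i) x
              + ((s - 2 * i : ℕ) : ℝ) * Ecoef s i * Herm (s + 1 - 2 * (i + 1)) x := by
        intro i _
        rcases le_or_gt (2 * i) s with hi | hi
        · have hx := x_Herm (s - 2 * i) x
          have e1 : s - 2 * i + 1 = s + 1 - 2 * i := by omega
          have e2 : s - 2 * i - 1 = s + 1 - 2 * (i + 1) := by omega
          rw [e1, e2] at hx
          calc Ecoef s i * (x * Herm (s - 2 * i) x) = Ecoef s i * (x * Herm (s - 2 * i) x) := rfl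
            _ = _ := by rw [hx]; ring
        · rw [Ecoef_big s i hi]; ring
      rw [Finset.sum_congr rfl expand, Finset.sum_add_distrib]
      have e : ∑ i ∈ Finset.range (s + 2), Ecoef (s + 1) i * Herm (s + 1 - 2 * i) x
          = (∑ i ∈ Finset.range (s + 1), Ecoef (s + 1) (i + 1) * Herm (s + 1 - 2 * (i + 1)) x)
            + Ecoef (s + 1) 0 * Herm (s + 1 - 2 * 0) x :=
        Finset.sum_range_succ' (fun i => Ecoef (s + 1) i * Herm (s + 1 - 2 * i) x) (s + 1)
      have e2 : ∑ i ∈ Finset.range (s + 2), (1 / 2 : ℝ) * Ecoef s i * Herm (s + 1 - 2 * i) x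
          = (∑ i ∈ Finset.range (s + 1), (1 / 2 : ℝ) * Ecoef s (i + 1) * Herm (s + 1 - 2 * (i + 1)) x)
            + (1 / 2 : ℝ) * Ecoef s 0 * Herm (s + 1 - 2 * 0) x :=
        Finset.sum_range_succ' (fun i => (1 / 2 : ℝ) * Ecoef s i * Herm (s + 1 - 2 * i) x) (s + 1)
      have e3 : ∑ i ∈ Finset.range (s + 2), (1 / 2 : ℝ) * Ecoef s i * Herm (s + 1 - 2 * i) x
          = ∑ i ∈ Finset.range (s + 1), (1 / 2 : ℝ) * Ecoef s i * Herm (s + 1 - 2 * i) x := by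
        rw [Finset.sum_range_succ, Ecoef_big s (s + 1) (by omega)]
        ring
      rw [e, ← e3, e2]
      have final : ∀ i ∈ Finset.range (s + 1),
          Ecoef (s + 1) (i + 1) * Herm (s + 1 - 2 * (i + 1)) x =
            (1 / 2 : ℝ) * Ecoef s (i + 1) * Herm (s + 1 - 2 * (i + 1)) x
              + ((s - 2 * i : ℕ) : ℝ) * Ecoef s i * Herm (s + 1 - 2 * (i + 1)) x := by
        intro i _
        rw [Ecoef_rec]
        ring
      rw [Finset.sum_congr rfl final, Finset.sum_add_distrib]
      have hz : Ecoef (s + 1) 0 * Herm (s + 1 - 2 * 0) x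
          = (1 / 2 : ℝ) * Ecoef s 0 * Herm (s + 1 - 2 * 0) x := by
        rw [Ecoef_zero_right, Ecoef_zero_right, pow_succ]
        ring
      rw [hz]
      ring

lemma ccoef_zero_of_big (a m k : ℕ) (h : m < k) : ccoef a m k = 0 := by
  simp [ccoef, Nat.choose_eq_zero_of_lt h]

noncomputable def cms (s m j : ℕ) : ℝ :=
  ∑ k ∈ Finset.range (j + 1), Ecoef s k * ccoef (s - 2 * k) m (j - k)

theorem xs_Hm (s m : ℕ) (x : ℝ) :
    x ^ s * Herm m x = ∑ j ∈ Finset.range (s + m + 1), cms s m j * Herm (s + m - 2 * j) x := by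
  have h1 : x ^ s * Herm m x = ∑ i ∈ Finset.range (s + 1), ∑ k ∈ Finset.range (m + 1),
      Ecoef s i * ccoef (s - 2 * i) m k * Herm (s + m - 2 * (i + k)) x := by
    rw [xpow_expand, Finset.sum_mul]
    refine Finset.sum_congr rfl fun i _ => ?_
    rw [mul_assoc, Herm_mul (s - 2 * i) m x, Finset.mul_sum]
    refine Finset.sum_congr rfl fun k _ => ?_
    rcases le_or_gt (2 * i) s with hi | hi
    · have e : s - 2 * i + m - 2 * k = s + m - 2 * (i + k) := by omega
      rw [e]; ring
    · rw [Ecoef_big s i hi]; ring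
  rw [h1]
  have h2 : ∑ i ∈ Finset.range (s + 1), ∑ k ∈ Finset.range (m + 1),
      Ecoef s i * ccoef (s - 2 * i) m k * Herm (s + m - 2 * (i + k)) x
      = ∑ i ∈ Finset.range (s + m + 1), ∑ k ∈ Finset.range (s + m + 1 - i),
      Ecoef s i * ccoef (s - 2 * i) m k * Herm (s + m - 2 * (i + k)) x := by
    rw [← Finset.sum_subset (Finset.range_subset_range.2 (by omega : s + 1 ≤ s + m + 1))
      (fun i _ hi2 => ?_)]
    · refine Finset.sum_congr rfl fun i hi => ?_
      simp only [mem_range] at hi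
      refine Finset.sum_subset (Finset.range_subset_range.2 (by omega : m + 1 ≤ s + m + 1 - i))
        (fun k _ hk2 => ?_)
      simp only [mem_range] at hk2
      rw [ccoef_zero_of_big _ m k (by omega)]
      ring
    · simp only [mem_range] at hi2
      refine Finset.sum_eq_zero fun k _ => ?_
      rw [Ecoef_big s i (by omega)]
      ring
  rw [h2, ← Finset.sum_range_diag_flip (s + m + 1)
    (fun i k => Ecoef s i * ccoef (s - 2 * i) m k * Herm (s + m - 2 * (i + k)) x)]
  refine Finset.sum_congr rfl fun j hj => ?_
  rw [cms, Finset.sum_mul]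
  refine Finset.sum_congr rfl fun k hk => ?_
  simp only [mem_range] at hk
  have e : k + (j - k) = j := by omega
  rw [e]

section Analysis

variable {β : ℝ}

lemma integrable_pow_exp (hβ : 0 < β) (n : ℕ) :
    MeasureTheory.Integrable (fun x : ℝ => x ^ n * Real.exp (-β * x ^ 2)) := by
  have := integrable_rpow_mul_exp_neg_mul_sq hβ
    (show (-1 : ℝ) < n from lt_of_lt_of_le neg_one_lt_zero (Nat.cast_nonneg n))
  simpa [Real.rpow_natCast] using this

lemma moment_odd (hβ : 0 < β) (t : ℕ) :
    ∫ x : ℝ, x ^ (2 * t + 1) * Real.exp (-β * x ^ 2) = 0 := by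
  set f : ℝ → ℝ := fun x => x ^ (2 * t + 1) * Real.exp (-β * x ^ 2) with hf
  have hint : MeasureTheory.Integrable f := integrable_pow_exp hβ _
  have hodd : ∀ x, f (-x) = -f x := by
    intro x
    simp only [hf]
    rw [Odd.neg_pow ⟨t, by ring⟩]
    ring_nf
  have hsplit : ∫ x, f x = (∫ x in Set.Iic 0, f x) + ∫ x in Set.Ioi 0, f x := by
    have h := MeasureTheory.setIntegral_union (s := Set.Iic (0:ℝ)) (t := Set.Ioi (0:ℝ))
      (Set.Iic_disjoint_Ioi le_rfl) measurableSet_Ioi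
      hint.integrableOn hint.integrableOn (f := f)
    rw [Set.Iic_union_Ioi] at h
    rw [← h, MeasureTheory.setIntegral_univ]
  have hneg : ∫ x in Set.Iic 0, f x = - ∫ x in Set.Ioi 0, f x := by
    have h1 : ∫ x in Set.Ioi (0 : ℝ), f (-x) = ∫ x in Set.Iic (-(0 : ℝ)), f x :=
      integral_comp_neg_Ioi 0 f
    simp only [neg_zero] at h1
    rw [← h1]
    rw [MeasureTheory.integral_congr_ae (Filter.Eventually.of_forall fun x => hodd x)]
    rw [MeasureTheory.integral_neg]
  rw [hsplit, hneg]
  ring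

lemma Gamma_nat_add_half (t : ℕ) :
    Real.Gamma ((t : ℝ) + 1 / 2) =
      ((2 * t).factorial : ℝ) * Real.sqrt π / (4 ^ t * (t.factorial : ℝ)) := by
  induction t with
  | zero => norm_num [Real.Gamma_one_half_eq]
  | succ t ih =>
      have h : (((t : ℕ) + 1 : ℕ) : ℝ) + 1 / 2 = ((t : ℝ) + 1 / 2) + 1 := by push_cast; ring
      rw [h, Real.Gamma_add_one (by positivity), ih]
      have h2 : (2 * (t + 1)).factorial = (2 * t + 2) * ((2 * t + 1) * (2 * t).factorial) := by
        have e : 2 * (t + 1) = (2 * t + 1) + 1 := by ring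
        rw [e, Nat.factorial_succ, Nat.factorial_succ]
      rw [h2]
      push_cast [Nat.factorial_succ, pow_succ]
      field_simp
      ring

lemma moment_even (hβ : 0 < β) (t : ℕ) :
    ∫ x : ℝ, x ^ (2 * t) * Real.exp (-β * x ^ 2) =
      Real.Gamma ((t : ℝ) + 1 / 2) / (β ^ t * Real.sqrt β) := by
  have habs : (fun x : ℝ => x ^ (2 * t) * Real.exp (-β * x ^ 2))
      = fun x : ℝ => |x| ^ (2 * t) * Real.exp (-β * |x| ^ 2) := by
    funext x
    rw [Even.pow_abs ⟨t, by ring⟩, sq_abs]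
  have key := integral_comp_abs (f := fun y : ℝ => y ^ (2 * t) * Real.exp (-β * y ^ 2))
  rw [habs, key]
  have h2 : ∫ x in Set.Ioi (0 : ℝ), x ^ (2 * t) * Real.exp (-β * x ^ 2)
      = β ^ (-(((2 * t : ℕ) : ℝ) + 1) / 2) * (1 / 2) * Real.Gamma ((((2 * t : ℕ) : ℝ) + 1) / 2) := by
    rw [← integral_rpow_mul_exp_neg_mul_rpow two_pos
      (show (-1 : ℝ) < ((2 * t : ℕ) : ℝ) from lt_of_lt_of_le neg_one_lt_zero (Nat.cast_nonneg _)) hβ]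
    refine MeasureTheory.setIntegral_congr_fun measurableSet_Ioi fun x _ => ?_
    have hx2 : x ^ (2 : ℝ) = x ^ (2 : ℕ) := by
      rw [← Real.rpow_natCast x 2]; norm_num
    rw [Real.rpow_natCast, hx2]
  rw [h2]
  have hg : Real.Gamma ((((2 * t : ℕ) : ℝ) + 1) / 2) = Real.Gamma ((t : ℝ) + 1 / 2) := by
    congr 1; push_cast; ring
  have hb : β ^ (-(((2 * t : ℕ) : ℝ) + 1) / 2) = (β ^ t * Real.sqrt β)⁻¹ := by
    have e : -(((2 * t : ℕ) : ℝ) + 1) / 2 = (-(t : ℝ)) + (-(1 / 2)) := by push_cast; ring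
    rw [e, Real.rpow_add hβ, Real.rpow_neg hβ.le, Real.rpow_natCast,
      Real.rpow_neg hβ.le, Real.sqrt_eq_rpow, mul_inv]
  rw [hg, hb]
  ring

end Analysis

section HermInt

variable {β : ℝ}

noncomputable def Gfun (β : ℝ) (q : ℕ) : ℝ :=
  if Even q then ((q.factorial : ℝ) / (((q / 2).factorial : ℝ))) * ((1 - β) / β) ^ (q / 2) else 0

lemma integrable_Herm_exp (hβ : 0 < β) (q : ℕ) :
    MeasureTheory.Integrable (fun x : ℝ => Herm q x * Real.exp (-β * x ^ 2)) := by
  have hfun : (fun x : ℝ => Herm q x * Real.exp (-β * x ^ 2))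
      = fun x : ℝ => ∑ k ∈ Finset.range (q + 1),
          (Acoef q k * 2 ^ (q - 2 * k)) * (x ^ (q - 2 * k) * Real.exp (-β * x ^ 2)) := by
    funext x
    rw [Herm_eq_full, Finset.sum_mul]
    refine Finset.sum_congr rfl fun k _ => ?_
    rw [mul_pow]
    ring
  rw [hfun]
  exact MeasureTheory.integrable_finset_sum _ fun k _ =>
    (integrable_pow_exp hβ _).const_mul _

lemma int_Herm (hβ : 0 < β) (q : ℕ) :
    ∫ x : ℝ, Herm q x * Real.exp (-β * x ^ 2) = Real.sqrt (π / β) * Gfun β q := by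
  have hfun : (fun x : ℝ => Herm q x * Real.exp (-β * x ^ 2))
      = fun x : ℝ => ∑ k ∈ Finset.range (q + 1),
          (Acoef q k * 2 ^ (q - 2 * k)) * (x ^ (q - 2 * k) * Real.exp (-β * x ^ 2)) := by
    funext x
    rw [Herm_eq_full, Finset.sum_mul]
    refine Finset.sum_congr rfl fun k _ => ?_
    rw [mul_pow]
    ring
  rw [hfun, MeasureTheory.integral_finset_sum _
    (fun k _ => (integrable_pow_exp hβ _).const_mul _)]
  simp_rw [MeasureTheory.integral_const_mul]
  rcases Nat.even_or_odd q with ⟨u, hu⟩ | ⟨u, hu⟩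
  · -- even case, q = 2u  (hu : q = u + u)
    have hq : q = 2 * u := by omega
    subst hq
    have hGf : Gfun β (2 * u) = ((2 * u).factorial : ℝ) / ((u.factorial : ℝ)) * ((1 - β) / β) ^ u := by
      rw [Gfun, if_pos ⟨u, by ring⟩, show (2 * u) / 2 = u by omega]
    rw [hGf]
    rw [← Finset.sum_subset (Finset.range_subset_range.2 (by omega : u + 1 ≤ 2 * u + 1))
      (fun k _ hk2 => by
        simp only [mem_range] at hk2
        rw [Acoef, if_neg (by omega)]
        ring)]
    have hbin : ((1 - β) / β) ^ u = (∑ k ∈ Finset.range (u + 1),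
        (-β) ^ k * 1 ^ (u - k) * (u.choose k : ℝ)) / β ^ u := by
      rw [← add_pow (-β) 1 u, div_pow, show (-β + 1) = 1 - β by ring]
    rw [hbin, Finset.sum_div, Finset.mul_sum, Finset.mul_sum, eq_comm]
    refine Finset.sum_congr rfl fun k hk => ?_
    simp only [mem_range] at hk
    obtain ⟨t, ht⟩ : ∃ t, u = k + t := ⟨u - k, by omega⟩
    subst ht
    have e1 : 2 * (k + t) - 2 * k = 2 * t := by omega
    rw [Acoef, if_pos (by omega), e1, moment_even hβ t, _root_.Gamma_nat_add_half t]
    rw [Nat.cast_choose ℝ (show k ≤ k + t by omega)]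
    have e2 : k + t - k = t := by omega
    rw [e2, one_pow, Real.sqrt_div' π (by positivity)]
    rw [pow_mul]
    have h1 : Real.sqrt β ≠ 0 := by positivity
    have h2 : (k.factorial : ℝ) ≠ 0 := by exact_mod_cast Nat.factorial_ne_zero k
    have h3 : (t.factorial : ℝ) ≠ 0 := by exact_mod_cast Nat.factorial_ne_zero t
    have h4 : ((2 * t).factorial : ℝ) ≠ 0 := by exact_mod_cast Nat.factorial_ne_zero _
    have h5 : (β : ℝ) ≠ 0 := hβ.ne'
    field_simp
    ring
  · -- odd case : q = 2u+1
    have hq : q = 2 * u + 1 := by omega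
    subst hq
    have hGf : Gfun β (2 * u + 1) = 0 := by
      rw [Gfun, if_neg (by simp [Nat.even_add_one, parity_simps])]
    rw [hGf, mul_zero]
    refine Finset.sum_eq_zero fun k hk => ?_
    simp only [mem_range] at hk
    rcases le_or_gt (2 * k) (2 * u + 1) with h | h
    · obtain ⟨t, ht⟩ : ∃ t, 2 * u + 1 - 2 * k = 2 * t + 1 := ⟨u - k, by omega⟩
      rw [ht, moment_odd hβ t, mul_zero]
    · rw [Acoef, if_neg (by omega)]
      ring

end HermInt

lemma ccoef_zero_of_big_left (a m k : ℕ) (h : a < k) : ccoef a m k = 0 := by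
  simp [ccoef, Nat.choose_eq_zero_of_lt h]

lemma cms_reflect (s m j : ℕ) :
    cms s m j = ∑ k ∈ Finset.range (j + 1),
      Ecoef s (j - k) * ccoef (s - 2 * (j - k)) m k := by
  rw [cms, ← Finset.sum_range_reflect (fun k => Ecoef s k * ccoef (s - 2 * k) m (j - k)) (j + 1)]
  refine Finset.sum_congr rfl fun k hk => ?_
  simp only [mem_range] at hk
  have e1 : j + 1 - 1 - k = j - k := by omega
  have e2 : j - (j - k) = k := by omega
  rw [e1, e2]

lemma cms_vanish (s m j : ℕ) (h : s + m < 2 * j) : cms s m j = 0 := by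
  rw [cms_reflect]
  refine Finset.sum_eq_zero fun k hk => ?_
  simp only [mem_range] at hk
  rcases le_or_gt (2 * (j - k)) s with h1 | h1
  · rcases le_or_gt k m with h2 | h2
    · rw [ccoef_zero_of_big_left _ m k (by omega)]
      ring
    · rw [ccoef_zero_of_big _ m k h2]
      ring
  · rw [Ecoef_big _ _ h1]
    ring

lemma cms_eq_stmt (m s j : ℕ) (hj : 2 * j ≤ m + s) :
    (2 : ℝ) ^ ((m : ℝ) - (s : ℝ)) * (m.factorial : ℝ) * (s.factorial : ℝ) /
        (((m + s - 2 * j).factorial : ℝ)) *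
      ∑ k ∈ Finset.Icc (m - 2 * j) (min (m + s - 2 * j) m),
        ((m + s - 2 * j).choose k : ℝ) *
          (((2 : ℝ) ^ k * (((m - k).factorial : ℕ) : ℝ))⁻¹ * invFacZ ((k : ℤ) + j - m)) =
      cms s m j := by
  set hi := min (m + s - 2 * j) m with hhi
  set pref : ℝ := (2 : ℝ) ^ ((m : ℝ) - (s : ℝ)) * (m.factorial : ℝ) * (s.factorial : ℝ) /
      (((m + s - 2 * j).factorial : ℝ)) with hpref
  rw [Finset.mul_sum]
  -- shrink Icc (m-2j) hi to Icc (m-j) hi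
  rw [← Finset.sum_subset (show Finset.Icc (m - j) hi ⊆ Finset.Icc (m - 2 * j) hi by
      intro k hk; simp only [Finset.mem_Icc] at *; omega)
    (fun k hk hk2 => by
      simp only [Finset.mem_Icc] at hk hk2
      have hneg : ¬ (0 ≤ (k : ℤ) + j - m) := by omega
      rw [invFacZ, if_neg hneg]
      ring)]
  rw [cms_reflect]
  -- shrink range (j+1) to Icc (m - hi) (min j m)
  rw [← Finset.sum_subset (show Finset.Icc (m - hi) (min j m) ⊆ Finset.range (j + 1) by
      intro k hk; simp only [Finset.mem_Icc, mem_range] at *; omega)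
    (fun k hk hk2 => by
      simp only [Finset.mem_Icc, mem_range] at hk hk2
      rcases le_or_gt k m with hkm | hkm
      · rcases le_or_gt (2 * (j - k)) s with h1 | h1
        · rw [ccoef_zero_of_big_left _ m k (by omega)]
          ring
        · rw [Ecoef_big _ _ h1]
          ring
      · rw [ccoef_zero_of_big _ m k hkm]
        ring)]
  -- now a bijection k' ↦ m - k'
  refine Finset.sum_nbij' (fun k' => m - k') (fun k => m - k) ?_ ?_ ?_ ?_ ?_
  · intro k' hk'
    simp only [Finset.mem_Icc, hhi] at *
    omega
  · intro k hk
    simp only [Finset.mem_Icc, hhi] at *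
    omega
  · intro k' hk'
    simp only [Finset.mem_Icc, hhi] at hk'
    omega
  · intro k hk
    simp only [Finset.mem_Icc, hhi] at hk
    omega
  · -- the per-term factorial identity
    intro k' hk'
    simp only [Finset.mem_Icc] at hk'
    obtain ⟨hlo, hhi'⟩ := hk'
    have hk'm : k' ≤ m := by omega
    have hk'p : k' ≤ m + s - 2 * j := by omega
    set d := k' + j - m with hd
    have hid : ((k' : ℤ) + j - m).toNat = d := by omega
    have hpos : (0 : ℤ) ≤ (k' : ℤ) + j - m := by omega
    rw [invFacZ, if_pos hpos, hid]
    have e1 : j - (m - k') = d := by omega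
    rw [e1]
    have h2d : 2 * d ≤ s := by omega
    rw [Ecoef, if_pos h2d, ccoef]
    have e2 : s - 2 * d - (m - k') = m + s - 2 * j - k' := by omega
    have e3 : m - (m - k') = k' := by omega
    rw [Nat.cast_choose ℝ (show k' ≤ m + s - 2 * j from hk'p),
        Nat.cast_choose ℝ (show m - k' ≤ s - 2 * d by omega),
        Nat.cast_choose ℝ (show m - k' ≤ m by omega), e2, e3]
    have hpow2 : (2 : ℝ) ^ ((m : ℝ) - (s : ℝ)) = 2 ^ m / 2 ^ s := by
      rw [Real.rpow_sub two_pos, Real.rpow_natCast, Real.rpow_natCast]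
    have hpowm : (2 : ℝ) ^ m = 2 ^ (m - k') * 2 ^ k' := by
      rw [← pow_add]
      congr 1
      omega
    rw [hpref, hpow2, hpowm]
    have f1 : ((m + s - 2 * j - k').factorial : ℝ) ≠ 0 := by exact_mod_cast Nat.factorial_ne_zero _
    have f2 : ((m - k').factorial : ℝ) ≠ 0 := by exact_mod_cast Nat.factorial_ne_zero _
    have f3 : (k'.factorial : ℝ) ≠ 0 := by exact_mod_cast Nat.factorial_ne_zero _
    have f4 : (d.factorial : ℝ) ≠ 0 := by exact_mod_cast Nat.factorial_ne_zero _
    have f5 : ((s - 2 * d).factorial : ℝ) ≠ 0 := by exact_mod_cast Nat.factorial_ne_zero _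
    have f6 : ((m + s - 2 * j).factorial : ℝ) ≠ 0 := by exact_mod_cast Nat.factorial_ne_zero _
    field_simp
lemma Gamma_half_reflect (t : ℕ) :
    Real.Gamma ((1 : ℝ) / 2 - t) * Real.Gamma ((t : ℝ) + 1 / 2) = π * (-1 : ℝ) ^ t := by
  have h := Real.Gamma_mul_Gamma_one_sub ((t : ℝ) + 1 / 2)
  have e : (1 : ℝ) - ((t : ℝ) + 1 / 2) = 1 / 2 - t := by ring
  rw [e] at h
  have hsin : Real.sin (π * ((t : ℝ) + 1 / 2)) = (-1 : ℝ) ^ t := by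
    have e2 : π * ((t : ℝ) + 1 / 2) = (t : ℝ) * π + π / 2 := by ring
    rw [e2, Real.sin_add_pi_div_two]
    have := Real.cos_int_mul_pi_sub 0 (t : ℤ)
    simp only [Real.cos_zero, mul_one, sub_zero] at this
    rw [show ((t : ℤ) : ℝ) = (t : ℝ) by push_cast; ring] at this
    rw [this]
    norm_num
  rw [hsin] at h
  have hne : ((-1 : ℝ) ^ t) ≠ 0 := by
    rcases Nat.even_or_odd t with he | ho
    · rw [Even.neg_one_pow he]; norm_num
    · rw [Odd.neg_one_pow ho]; norm_num
  rw [mul_comm] at h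
  rw [h]
  field_simp
  rcases Nat.even_or_odd t with he | ho
  · rw [Even.neg_one_pow he]; norm_num
  · rw [Odd.neg_one_pow ho]; norm_num

lemma term_eq {β : ℝ} (hβ : 0 < β) (m n s j k : ℕ) (hpar : Even (m + n + s))
    (hj : 2 * j ≤ m + s) (hk : k ≤ n) :
    ccoef (m + s - 2 * j) n k * (Real.sqrt (π / β) * Gfun β (m + s - 2 * j + n - 2 * k)) =
      (Real.sqrt β)⁻¹ * (((m + s - 2 * j).choose k : ℝ) * (n.choose k : ℝ) *
        ((2 : ℝ) ^ (-(2 : ℝ) * (j : ℝ) - (k : ℝ) + (m : ℝ) + (n : ℝ) + (s : ℝ)) * π *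
            (k.factorial : ℝ) /
          Real.Gamma ((1 + 2 * ((j : ℝ) + (k : ℝ)) - ((m : ℝ) + (n : ℝ)) - (s : ℝ)) / 2)) *
        ((β - 1) / β) ^ ((m + n + s - 2 * (j + k)) / 2)) := by
  rcases le_or_gt k (m + s - 2 * j) with hkp | hkp
  · -- main case
    obtain ⟨w, hw⟩ := hpar
    obtain ⟨t, ht⟩ : ∃ t, m + s - 2 * j + n - 2 * k = 2 * t :=
      ⟨(m + s - 2 * j + n - 2 * k) / 2, by omega⟩
    have hnat : m + n + s = 2 * j + 2 * k + 2 * t := by omega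
    have hnR : (m : ℝ) + (n : ℝ) + (s : ℝ)
        = 2 * (j : ℝ) + 2 * (k : ℝ) + 2 * (t : ℝ) := by exact_mod_cast hnat
    have hE : -(2 : ℝ) * (j : ℝ) - (k : ℝ) + (m : ℝ) + (n : ℝ) + (s : ℝ)
        = ((2 * t + k : ℕ) : ℝ) := by push_cast; linarith
    have hA : (1 + 2 * ((j : ℝ) + (k : ℝ)) - ((m : ℝ) + (n : ℝ)) - (s : ℝ)) / 2
        = 1 / 2 - (t : ℝ) := by field_simp; linarith
    have hD : (m + n + s - 2 * (j + k)) / 2 = t := by omega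
    rw [hE, Real.rpow_natCast, hA, hD, ht]
    rw [Gfun, if_pos ⟨t, by ring⟩, show 2 * t / 2 = t by omega]
    have hΓpos : 0 < Real.Gamma ((t : ℝ) + 1 / 2) := Real.Gamma_pos_of_pos (by positivity)
    have hΓ : Real.Gamma ((1 : ℝ) / 2 - t) = π * (-1 : ℝ) ^ t / Real.Gamma ((t : ℝ) + 1 / 2) := by
      rw [eq_div_iff hΓpos.ne']
      exact Gamma_half_reflect t
    rw [hΓ, _root_.Gamma_nat_add_half t]
    rw [show ((β - 1) / β : ℝ) = -((1 - β) / β) by ring, neg_pow]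
    rw [ccoef, Real.sqrt_div' π (by positivity)]
    rw [pow_add, pow_mul, show ((2 : ℝ) ^ 2) = 4 by norm_num]
    simp only [div_pow]
    have b1 : Real.sqrt β ≠ 0 := by positivity
    have b2 : Real.sqrt π ≠ 0 := by positivity
    have b3 : (β : ℝ) ≠ 0 := hβ.ne'
    have b4 : (t.factorial : ℝ) ≠ 0 := by exact_mod_cast Nat.factorial_ne_zero t
    have b5 : ((2 * t).factorial : ℝ) ≠ 0 := by exact_mod_cast Nat.factorial_ne_zero _
    have b6 : π ≠ 0 := Real.pi_ne_zero
    have hππ : Real.sqrt π * Real.sqrt π = π := Real.mul_self_sqrt Real.pi_pos.le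
    rcases Nat.even_or_odd t with he | ho
    · simp only [Even.neg_one_pow he]
      field_simp [hππ]
      have hq : β ^ t * ((1 - β) / β) ^ t = (1 - β) ^ t := by rw [← mul_pow]; congr 1; field_simp
      rw [Even.neg_pow he]
      linear_combination (-(((m + s - 2 * j).choose k : ℝ) * (n.choose k : ℝ))) * hq
    · simp only [Odd.neg_one_pow ho]
      field_simp [hππ]
      have hq : β ^ t * ((1 - β) / β) ^ t = (1 - β) ^ t := by rw [← mul_pow]; congr 1; field_simp
      rw [Odd.neg_pow ho]
      linear_combination (-(((m + s - 2 * j).choose k : ℝ) * (n.choose k : ℝ))) * hq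
  · -- k > m+s-2j : both sides vanish via choose = 0
    rw [ccoef, Nat.choose_eq_zero_of_lt hkp]
    push_cast [Nat.choose_eq_zero_of_lt hkp]
    ring

/-- Krein-like 2-functional of Hermite polynomials
(differential-equation approach). -/
theorem hermite_krein_2_functional_diffeq (m n s : ℕ) (hpar : Even (m + n + s))
    (β : ℝ) (hβ : 0 < β) :
    ∫ x : ℝ, x ^ s * Real.exp (-β * x ^ 2) * Herm m x * Herm n x =
      (Real.sqrt β)⁻¹ *
        ∑ j ∈ Finset.range ((m + s) / 2 + 1),
          (((2 : ℝ) ^ ((m : ℝ) - (s : ℝ)) * (m.factorial : ℝ) * (s.factorial : ℝ) /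
              ((m + s - 2 * j).factorial : ℝ)) *
            ∑ k ∈ Finset.Icc (m - 2 * j) (min (m + s - 2 * j) m),
              ((m + s - 2 * j).choose k : ℝ) *
                (((2 : ℝ) ^ k * ((m - k).factorial : ℝ))⁻¹ * invFacZ ((k : ℤ) + j - m))) *
          ∑ k ∈ Finset.range (min (m + s - 2 * j) n + 1),
            ((m + s - 2 * j).choose k : ℝ) * (n.choose k : ℝ) *
              ((2 : ℝ) ^ (-(2 : ℝ) * j - (k : ℝ) + (m : ℝ) + (n : ℝ) + (s : ℝ)) * π *
                  (k.factorial : ℝ) /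
                Real.Gamma ((1 + 2 * ((j : ℝ) + (k : ℝ)) - ((m : ℝ) + (n : ℝ)) - (s : ℝ)) / 2)) *
              ((β - 1) / β) ^ ((m + n + s - 2 * (j + k)) / 2) := by
  have hfun : (fun x : ℝ => x ^ s * Real.exp (-β * x ^ 2) * Herm m x * Herm n x)
      = fun x : ℝ => ∑ j ∈ Finset.range (m + s + 1), ∑ k ∈ Finset.range (n + 1),
          cms s m j * ccoef (m + s - 2 * j) n k *
            (Herm (m + s - 2 * j + n - 2 * k) x * Real.exp (-β * x ^ 2)) := by
    funext x
    have h1 : x ^ s * Real.exp (-β * x ^ 2) * Herm m x * Herm n x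
        = x ^ s * Herm m x * Herm n x * Real.exp (-β * x ^ 2) := by ring
    rw [h1, xs_Hm s m x, show s + m + 1 = m + s + 1 by omega, Finset.sum_mul, Finset.sum_mul]
    refine Finset.sum_congr rfl fun j hj => ?_
    rw [show s + m - 2 * j = m + s - 2 * j by omega]
    calc cms s m j * Herm (m + s - 2 * j) x * Herm n x * Real.exp (-β * x ^ 2)
        = cms s m j * (Herm (m + s - 2 * j) x * Herm n x) * Real.exp (-β * x ^ 2) := by ring
      _ = cms s m j * (∑ k ∈ Finset.range (n + 1),
            ccoef (m + s - 2 * j) n k * Herm (m + s - 2 * j + n - 2 * k) x)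
            * Real.exp (-β * x ^ 2) := by rw [Herm_mul (m + s - 2 * j) n x]
      _ = _ := by
          rw [Finset.mul_sum, Finset.sum_mul]
          refine Finset.sum_congr rfl fun k _ => ?_
          ring
  rw [hfun, MeasureTheory.integral_finset_sum _ (fun j _ =>
    MeasureTheory.integrable_finset_sum _ (fun k _ => (integrable_Herm_exp hβ _).const_mul _))]
  have hswap : ∀ j ∈ Finset.range (m + s + 1),
      (∫ x : ℝ, ∑ k ∈ Finset.range (n + 1), cms s m j * ccoef (m + s - 2 * j) n k *
          (Herm (m + s - 2 * j + n - 2 * k) x * Real.exp (-β * x ^ 2)))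
        = ∑ k ∈ Finset.range (n + 1), cms s m j * ccoef (m + s - 2 * j) n k *
            (Real.sqrt (π / β) * Gfun β (m + s - 2 * j + n - 2 * k)) := by
    intro j _
    rw [MeasureTheory.integral_finset_sum _ (fun k _ => (integrable_Herm_exp hβ _).const_mul _)]
    refine Finset.sum_congr rfl fun k _ => ?_
    rw [MeasureTheory.integral_const_mul, int_Herm hβ]
  rw [Finset.sum_congr rfl hswap]
  rw [← Finset.sum_subset (Finset.range_subset_range.2 (show (m + s) / 2 + 1 ≤ m + s + 1 by omega))
      (fun j _ hj2 => Finset.sum_eq_zero fun k _ => by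
        simp only [mem_range] at hj2
        rw [cms_vanish s m j (by omega)]
        ring)]
  rw [Finset.mul_sum]
  refine Finset.sum_congr rfl fun j hj => ?_
  simp only [mem_range] at hj
  have hj2 : 2 * j ≤ m + s := by omega
  have hext : ∑ k ∈ Finset.range (min (m + s - 2 * j) n + 1),
        ((m + s - 2 * j).choose k : ℝ) * (n.choose k : ℝ) *
          ((2 : ℝ) ^ (-(2 : ℝ) * j - (k : ℝ) + (m : ℝ) + (n : ℝ) + (s : ℝ)) * π *
              (k.factorial : ℝ) /
            Real.Gamma ((1 + 2 * ((j : ℝ) + (k : ℝ)) - ((m : ℝ) + (n : ℝ)) - (s : ℝ)) / 2)) *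
          ((β - 1) / β) ^ ((m + n + s - 2 * (j + k)) / 2)
      = ∑ k ∈ Finset.range (n + 1),
        ((m + s - 2 * j).choose k : ℝ) * (n.choose k : ℝ) *
          ((2 : ℝ) ^ (-(2 : ℝ) * j - (k : ℝ) + (m : ℝ) + (n : ℝ) + (s : ℝ)) * π *
              (k.factorial : ℝ) /
            Real.Gamma ((1 + 2 * ((j : ℝ) + (k : ℝ)) - ((m : ℝ) + (n : ℝ)) - (s : ℝ)) / 2)) *
          ((β - 1) / β) ^ ((m + n + s - 2 * (j + k)) / 2) := by
    refine Finset.sum_subset (Finset.range_subset_range.2 (by omega)) (fun k hk hk2 => ?_)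
    simp only [mem_range] at hk hk2
    rw [Nat.choose_eq_zero_of_lt (show m + s - 2 * j < k by omega)]
    push_cast
    ring
  rw [hext, cms_eq_stmt m s j hj2, Finset.mul_sum, Finset.mul_sum]
  refine Finset.sum_congr rfl fun k hk => ?_
  simp only [mem_range] at hk
  calc cms s m j * ccoef (m + s - 2 * j) n k *
        (Real.sqrt (π / β) * Gfun β (m + s - 2 * j + n - 2 * k))
      = cms s m j * (ccoef (m + s - 2 * j) n k *
          (Real.sqrt (π / β) * Gfun β (m + s - 2 * j + n - 2 * k))) := by ring
    _ = cms s m j * ((Real.sqrt β)⁻¹ * (((m + s - 2 * j).choose k : ℝ) * (n.choose k : ℝ) *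
          ((2 : ℝ) ^ (-(2 : ℝ) * j - (k : ℝ) + (m : ℝ) + (n : ℝ) + (s : ℝ)) * π *
              (k.factorial : ℝ) /
            Real.Gamma ((1 + 2 * ((j : ℝ) + (k : ℝ)) - ((m : ℝ) + (n : ℝ)) - (s : ℝ)) / 2)) *
          ((β - 1) / β) ^ ((m + n + s - 2 * (j + k)) / 2))) := by
        rw [term_eq hβ m n s j k hpar hj2 (by omega)]
    _ = _ := by ring
end
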